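/- arXiv:2412.07915 — 2 statements merged into one kernel-verified Lean document; each statement's English description precedes it below -/
import Mathlib

section
/- Let X, Y be linearly independent d-dimensional subspaces of ℝ^n (i.e., X ∩ Y = {0}). Let x, x' be independently uniformly sampled from the unit sphere of X, and y uniformly sampled from the unit sphere of Y, independent of x. Then E[⟨x, y⟩²] < E[⟨x, x'⟩²] = 1/d. -/
open MeasureTheory Metric Set
open scoped RealInnerProductSpace Pointwise

noncomputable section

/-- A linear isometry equivalence restricted to the unit sphere, as a measurable equiv. -/
def sphereME {d : ℕ} (ι : EuclideanSpace ℝ (Fin d) ≃ₗᵢ[ℝ] EuclideanSpace ℝ (Fin d)) :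
    sphere (0 : EuclideanSpace ℝ (Fin d)) 1 ≃ᵐ sphere (0 : EuclideanSpace ℝ (Fin d)) 1 where
  toEquiv :=
  { toFun := fun z => ⟨ι z, by
      rw [mem_sphere_zero_iff_norm, ι.norm_map]; exact mem_sphere_zero_iff_norm.1 z.2⟩
    invFun := fun z => ⟨ι.symm z, by
      rw [mem_sphere_zero_iff_norm, ι.symm.norm_map]; exact mem_sphere_zero_iff_norm.1 z.2⟩
    left_inv := fun z => Subtype.ext (ι.symm_apply_apply z)
    right_inv := fun z => Subtype.ext (ι.apply_symm_apply z) }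
  measurable_toFun := by
    apply Continuous.measurable
    exact Continuous.subtype_mk (ι.continuous.comp continuous_subtype_val) _
  measurable_invFun := by
    apply Continuous.measurable
    exact Continuous.subtype_mk (ι.symm.continuous.comp continuous_subtype_val) _

lemma coe_sphereME {d : ℕ} (ι : EuclideanSpace ℝ (Fin d) ≃ₗᵢ[ℝ] EuclideanSpace ℝ (Fin d))
    (z : sphere (0 : EuclideanSpace ℝ (Fin d)) 1) : (sphereME ι z : EuclideanSpace ℝ (Fin d)) = ι z := rfl

lemma map_sphereME {d : ℕ} (ι : EuclideanSpace ℝ (Fin d) ≃ₗᵢ[ℝ] EuclideanSpace ℝ (Fin d)) :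
    Measure.map (sphereME ι) (volume : Measure (EuclideanSpace ℝ (Fin d))).toSphere
      = (volume : Measure (EuclideanSpace ℝ (Fin d))).toSphere := by
  set μ := (volume : Measure (EuclideanSpace ℝ (Fin d)))
  ext s hs
  rw [(sphereME ι).map_apply, μ.toSphere_apply' hs, μ.toSphere_apply' ((sphereME ι).measurable hs)]
  have him : (Subtype.val '' ((sphereME ι) ⁻¹' s)) = ι ⁻¹' (Subtype.val '' s) := by
    ext v
    constructor
    · rintro ⟨z, hz, rfl⟩
      exact ⟨sphereME ι z, hz, rfl⟩
    · rintro ⟨w, hw, hwv⟩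
      have hv : v ∈ sphere (0 : EuclideanSpace ℝ (Fin d)) 1 := by
        rw [mem_sphere_zero_iff_norm, ← ι.norm_map, ← hwv]
        exact mem_sphere_zero_iff_norm.1 w.2
      refine ⟨⟨v, hv⟩, ?_, rfl⟩
      show sphereME ι _ ∈ s
      have : sphereME ι ⟨v, hv⟩ = w := Subtype.ext hwv.symm
      rw [this]; exact hw
  rw [him]
  have hsmul : (Ioo (0:ℝ) 1) • (ι ⁻¹' (Subtype.val '' s))
      = ι ⁻¹' ((Ioo (0:ℝ) 1) • (Subtype.val '' s)) := by
    ext v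
    simp only [mem_smul_set, Set.mem_preimage]
    constructor
    · rintro ⟨c, hc, x, hx, rfl⟩
      exact ⟨c, hc, ι x, hx, (ι.map_smul c x).symm⟩
    · rintro ⟨c, hc, x, hx, hxv⟩
      refine ⟨c, hc, ι.symm x, by simpa using hx, ?_⟩
      apply ι.injective
      rw [ι.map_smul, ι.apply_symm_apply]; exact hxv
  rw [hsmul]
  rw [ι.measurePreserving.measure_preimage_emb ι.toHomeomorph.toMeasurableEquiv.measurableEmbedding]

section B
variable {d : ℕ}

local notation "Ed" => EuclideanSpace ℝ (Fin d)
local notation "ν" => MeasureTheory.Measure.toSphere (volume : MeasureTheory.Measure (EuclideanSpace ℝ (Fin d)))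

lemma integrable_inner_sq (v : Ed) :
    Integrable (fun z : sphere (0 : Ed) 1 => ⟪(z : Ed), v⟫ ^ 2) ν := by
  have hc : Continuous (fun z : sphere (0 : Ed) 1 => ⟪(z : Ed), v⟫ ^ 2) := by
    exact ((continuous_subtype_val.inner continuous_const)).pow 2
  exact hc.integrable_of_hasCompactSupport (HasCompactSupport.of_compactSpace _)

lemma integral_inner_sq_isometry (ι : Ed ≃ₗᵢ[ℝ] Ed) (v : Ed) :
    ∫ z : sphere (0 : Ed) 1, ⟪(z : Ed), ι v⟫ ^ 2 ∂ν
      = ∫ z : sphere (0 : Ed) 1, ⟪(z : Ed), v⟫ ^ 2 ∂ν := by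
  have hmp : MeasurePreserving (sphereME ι) ν ν :=
    ⟨(sphereME ι).measurable, map_sphereME ι⟩
  have := hmp.integral_comp (sphereME ι).measurableEmbedding
    (fun z : sphere (0 : Ed) 1 => ⟪(z : Ed), ι v⟫ ^ 2)
  rw [← this]
  congr 1
  ext z
  rw [coe_sphereME, ι.inner_map_map]

lemma integral_inner_sq_unit_eq (u u' : Ed) (hu : ‖u‖ = 1) (hu' : ‖u'‖ = 1) :
    ∫ z : sphere (0 : Ed) 1, ⟪(z : Ed), u⟫ ^ 2 ∂ν
      = ∫ z : sphere (0 : Ed) 1, ⟪(z : Ed), u'⟫ ^ 2 ∂ν := by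
  have h := Submodule.reflection_sub (hu'.trans hu.symm)
  calc ∫ z : sphere (0 : Ed) 1, ⟪(z : Ed), u⟫ ^ 2 ∂ν
      = ∫ z : sphere (0 : Ed) 1, ⟪(z : Ed), Submodule.reflection (ℝ ∙ (u' - u))ᗮ u'⟫ ^ 2 ∂ν := by rw [h]
    _ = ∫ z : sphere (0 : Ed) 1, ⟪(z : Ed), u'⟫ ^ 2 ∂ν :=
      integral_inner_sq_isometry (Submodule.reflection (ℝ ∙ (u' - u))ᗮ) u'

lemma integral_inner_sq_single (hd : 0 < d) (i : Fin d) :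
    ∫ z : sphere (0 : Ed) 1, ⟪(z : Ed), EuclideanSpace.single i (1:ℝ)⟫ ^ 2 ∂ν
      = ((ν) Set.univ).toReal / d := by
  have hnorm : ∀ j : Fin d, ‖EuclideanSpace.single j (1:ℝ)‖ = 1 := by
    intro j; rw [EuclideanSpace.norm_single]; norm_num
  set c := ∫ z : sphere (0 : Ed) 1, ⟪(z : Ed), EuclideanSpace.single i (1:ℝ)⟫ ^ 2 ∂ν with hc
  have hall : ∀ j : Fin d,
      ∫ z : sphere (0 : Ed) 1, ⟪(z : Ed), EuclideanSpace.single j (1:ℝ)⟫ ^ 2 ∂ν = c :=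
    fun j => integral_inner_sq_unit_eq _ _ (hnorm j) (hnorm i)
  have hsum : ∑ j : Fin d, ∫ z : sphere (0 : Ed) 1,
      ⟪(z : Ed), EuclideanSpace.single j (1:ℝ)⟫ ^ 2 ∂ν = ((ν) Set.univ).toReal := by
    rw [← integral_finset_sum _ (fun j _ => integrable_inner_sq _)]
    have : ∀ z : sphere (0 : Ed) 1,
        ∑ j : Fin d, ⟪(z : Ed), EuclideanSpace.single j (1:ℝ)⟫ ^ 2 = 1 := by
      intro z
      have hz : ‖(z : Ed)‖ = 1 := mem_sphere_zero_iff_norm.1 z.2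
      have : ∀ j, ⟪(z : Ed), EuclideanSpace.single j (1:ℝ)⟫ = (z : Ed) j := by
        intro j
        simp [EuclideanSpace.inner_single_right]
      simp_rw [this]
      have hnn : ∑ j : Fin d, ((z : Ed) j) ^ 2 = ‖(z : Ed)‖ ^ 2 := by
        rw [EuclideanSpace.norm_eq, Real.sq_sqrt]
        · simp [sq_abs]
        · positivity
      rw [hnn, hz, one_pow]
    simp_rw [this]
    rw [integral_const]
    simp [Measure.real]
  rw [Finset.sum_congr rfl (fun j _ => hall j), Finset.sum_const] at hsum
  simp only [Finset.card_univ, Fintype.card_fin, nsmul_eq_mul] at hsum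
  rw [eq_div_iff (Nat.cast_ne_zero.mpr hd.ne' : (d:ℝ) ≠ 0), mul_comm]
  exact hsum

lemma integral_inner_sq (hd : 0 < d) (v : Ed) :
    ∫ z : sphere (0 : Ed) 1, ⟪(z : Ed), v⟫ ^ 2 ∂ν
      = ‖v‖ ^ 2 / d * ((ν) Set.univ).toReal := by
  rcases eq_or_ne v 0 with rfl | hv
  · simp
  · have hnv : ‖v‖ ≠ 0 := norm_ne_zero_iff.2 hv
    have hu : ‖(‖v‖⁻¹ • v : Ed)‖ = 1 := by
      rw [norm_smul, norm_inv, norm_norm, inv_mul_cancel₀ hnv]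
    have key := integral_inner_sq_unit_eq (‖v‖⁻¹ • v) (EuclideanSpace.single ⟨0, hd⟩ (1:ℝ)) hu
      (by rw [EuclideanSpace.norm_single]; norm_num)
    rw [integral_inner_sq_single hd] at key
    have hdecomp : ∀ z : sphere (0 : Ed) 1,
        ⟪(z : Ed), v⟫ ^ 2 = ‖v‖ ^ 2 * ⟪(z : Ed), ‖v‖⁻¹ • v⟫ ^ 2 := by
      intro z
      rw [real_inner_smul_right]
      ring_nf
      rw [mul_comm]
      field_simp
    simp_rw [hdecomp]
    rw [integral_const_mul, key]
    ring

lemma mass_toReal_pos (hd : 0 < d) :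
    0 < (((ν)) Set.univ).toReal := by
  haveI : Nonempty (Fin d) := Fin.pos_iff_nonempty.mp hd
  rw [MeasureTheory.Measure.toSphere_apply_univ]
  apply ENNReal.toReal_pos
  · apply mul_ne_zero
    · simp [finrank_euclideanSpace, hd.ne']
    · exact (measure_ball_pos _ _ one_pos).ne'
  · exact ENNReal.mul_ne_top (ENNReal.natCast_ne_top _) measure_ball_lt_top.ne

lemma toSphere_neZero (hd : 0 < d) : NeZero ((ν)) := by
  constructor
  intro h
  have := mass_toReal_pos hd
  rw [h] at this
  simp at this

lemma average_inner_sq (hd : 0 < d) (v : Ed) :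
    ⨍ z : sphere (0 : Ed) 1, ⟪(z : Ed), v⟫ ^ 2 ∂ν = ‖v‖ ^ 2 / d := by
  rw [average_eq, integral_inner_sq hd v, smul_eq_mul]
  rw [inv_mul_eq_div, mul_div_assoc, measureReal_def, div_self (mass_toReal_pos hd).ne', mul_one]

end B

lemma norm_adjoint_lt {d n : ℕ}
    (f g : EuclideanSpace ℝ (Fin d) →ₗᵢ[ℝ] EuclideanSpace ℝ (Fin n))
    (hindep : LinearMap.range f.toLinearMap ⊓ LinearMap.range g.toLinearMap = ⊥)
    (z : EuclideanSpace ℝ (Fin d)) (hz : ‖z‖ = 1) :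
    ‖LinearMap.adjoint g.toLinearMap (f z)‖ < 1 := by
  set v := f z with hv_def
  have hv : ‖v‖ = 1 := by rw [hv_def, f.norm_map, hz]
  set u := LinearMap.adjoint g.toLinearMap v with hu_def
  have h1 : ‖u‖ ^ 2 = ⟪v, g u⟫ := by
    rw [← real_inner_self_eq_norm_sq, hu_def]
    exact LinearMap.adjoint_inner_left g.toLinearMap u v
  have h2 : ⟪v, g u⟫ ≤ ‖u‖ := by
    calc ⟪v, g u⟫ ≤ ‖v‖ * ‖g u‖ := real_inner_le_norm v (g u)
      _ = ‖u‖ := by rw [hv, g.norm_map, one_mul]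
  have hle : ‖u‖ ≤ 1 := by
    rcases eq_or_lt_of_le (norm_nonneg u) with h0 | h0
    · rw [← h0]; norm_num
    · have : ‖u‖ * ‖u‖ ≤ ‖u‖ * 1 := by
        rw [mul_one]; calc ‖u‖ * ‖u‖ = ‖u‖ ^ 2 := (sq ‖u‖).symm
          _ ≤ ‖u‖ := h1.le.trans h2
      exact le_of_mul_le_mul_left this h0
  refine lt_of_le_of_ne hle fun heq => ?_
  have hinner : ⟪v, g u⟫ = 1 := by rw [← h1, heq, one_pow]
  have hgu : ‖g u‖ = 1 := by rw [g.norm_map, heq]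
  have hvg : v = g u := by
    have : ‖v - g u‖ ^ 2 = 0 := by
      rw [norm_sub_sq_real, hv, hgu, hinner]; norm_num
    have := pow_eq_zero_iff (n := 2) (by norm_num) |>.mp this
    exact sub_eq_zero.mp (by rwa [norm_eq_zero] at this)
  have hmem : v ∈ LinearMap.range f.toLinearMap ⊓ LinearMap.range g.toLinearMap :=
    ⟨⟨z, rfl⟩, ⟨u, hvg.symm⟩⟩
  rw [hindep, Submodule.mem_bot] at hmem
  rw [hmem, norm_zero] at hv
  exact one_ne_zero hv.symm

lemma average_le_of_le {α : Type*} [MeasurableSpace α] (μ : MeasureTheory.Measure α)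
    [IsFiniteMeasure μ] [NeZero μ] {h : α → ℝ} (hint : Integrable h μ) {M : ℝ}
    (hb : ∀ a, h a ≤ M) : ⨍ a, h a ∂μ ≤ M := by
  have hμ : (μ Set.univ).toReal ≠ 0 :=
    ENNReal.toReal_ne_zero.mpr ⟨(Measure.measure_univ_ne_zero).mpr (NeZero.ne μ),
      measure_ne_top μ Set.univ⟩
  rw [average_eq, smul_eq_mul]
  have h1 : ∫ a, h a ∂μ ≤ ∫ _ : α, M ∂μ := integral_mono hint (integrable_const M) hb
  rw [integral_const, smul_eq_mul] at h1
  calc (μ Set.univ).toReal⁻¹ * ∫ a, h a ∂μ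
      ≤ (μ Set.univ).toReal⁻¹ * ((μ Set.univ).toReal * M) := by
        apply mul_le_mul_of_nonneg_left h1 (by positivity)
    _ = M := by rw [← mul_assoc, inv_mul_cancel₀ hμ, one_mul]

/-- Let `X`, `Y` be linearly independent `d`-dimensional subspaces of `ℝⁿ`
(presented as ranges of linear isometries `f`, `g : ℝᵈ → ℝⁿ` with `X ∩ Y = {0}`).
For `x, x'` independent uniform on the unit sphere of `X` and `y` uniform on the unit
sphere of `Y`, one has `E[⟨x, y⟩²] < E[⟨x, x'⟩²] = 1/d`. -/
theorem expected_inner_sq_subspaces (n d : ℕ) (hd : 0 < d)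
    (f g : EuclideanSpace ℝ (Fin d) →ₗᵢ[ℝ] EuclideanSpace ℝ (Fin n))
    (hindep : LinearMap.range f.toLinearMap ⊓ LinearMap.range g.toLinearMap = ⊥) :
    (⨍ z : sphere (0 : EuclideanSpace ℝ (Fin d)) 1,
      ⨍ w : sphere (0 : EuclideanSpace ℝ (Fin d)) 1,
        ⟪f (z : EuclideanSpace ℝ (Fin d)), g (w : EuclideanSpace ℝ (Fin d))⟫ ^ 2
      ∂((volume : Measure (EuclideanSpace ℝ (Fin d))).toSphere)
      ∂((volume : Measure (EuclideanSpace ℝ (Fin d))).toSphere))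
    < (⨍ z : sphere (0 : EuclideanSpace ℝ (Fin d)) 1,
      ⨍ w : sphere (0 : EuclideanSpace ℝ (Fin d)) 1,
        ⟪f (z : EuclideanSpace ℝ (Fin d)), f (w : EuclideanSpace ℝ (Fin d))⟫ ^ 2
      ∂((volume : Measure (EuclideanSpace ℝ (Fin d))).toSphere)
      ∂((volume : Measure (EuclideanSpace ℝ (Fin d))).toSphere))
    ∧ (⨍ z : sphere (0 : EuclideanSpace ℝ (Fin d)) 1,
      ⨍ w : sphere (0 : EuclideanSpace ℝ (Fin d)) 1,
        ⟪f (z : EuclideanSpace ℝ (Fin d)), f (w : EuclideanSpace ℝ (Fin d))⟫ ^ 2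
      ∂((volume : Measure (EuclideanSpace ℝ (Fin d))).toSphere)
      ∂((volume : Measure (EuclideanSpace ℝ (Fin d))).toSphere)) = 1 / d := by
  haveI : Nonempty (Fin d) := Fin.pos_iff_nonempty.mp hd
  haveI hne : NeZero ((volume : Measure (EuclideanSpace ℝ (Fin d))).toSphere) :=
    toSphere_neZero hd
  haveI : Nonempty (sphere (0 : EuclideanSpace ℝ (Fin d)) 1) :=
    (NormedSpace.sphere_nonempty.mpr zero_le_one).to_subtype
  set A := LinearMap.adjoint g.toLinearMap with hA
  -- the equality part
  have heq : (⨍ z : sphere (0 : EuclideanSpace ℝ (Fin d)) 1,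
      ⨍ w : sphere (0 : EuclideanSpace ℝ (Fin d)) 1,
        ⟪f (z : EuclideanSpace ℝ (Fin d)), f (w : EuclideanSpace ℝ (Fin d))⟫ ^ 2
      ∂((volume : Measure (EuclideanSpace ℝ (Fin d))).toSphere)
      ∂((volume : Measure (EuclideanSpace ℝ (Fin d))).toSphere)) = 1 / d := by
    have hin : ∀ z : sphere (0 : EuclideanSpace ℝ (Fin d)) 1,
        (⨍ w : sphere (0 : EuclideanSpace ℝ (Fin d)) 1,
          ⟪f (z : EuclideanSpace ℝ (Fin d)), f (w : EuclideanSpace ℝ (Fin d))⟫ ^ 2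
        ∂((volume : Measure (EuclideanSpace ℝ (Fin d))).toSphere)) = 1 / d := by
      intro z
      have h1 : (⨍ w : sphere (0 : EuclideanSpace ℝ (Fin d)) 1,
          ⟪f (z : EuclideanSpace ℝ (Fin d)), f (w : EuclideanSpace ℝ (Fin d))⟫ ^ 2
          ∂((volume : Measure (EuclideanSpace ℝ (Fin d))).toSphere))
          = ⨍ w : sphere (0 : EuclideanSpace ℝ (Fin d)) 1,
            ⟪(w : EuclideanSpace ℝ (Fin d)), (z : EuclideanSpace ℝ (Fin d))⟫ ^ 2
          ∂((volume : Measure (EuclideanSpace ℝ (Fin d))).toSphere) :=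
        average_congr (Filter.Eventually.of_forall fun w => by
          simp only [LinearIsometry.inner_map_map]
          rw [real_inner_comm])
      rw [h1, average_inner_sq hd, mem_sphere_zero_iff_norm.1 z.2, one_pow]
    calc (⨍ z : sphere (0 : EuclideanSpace ℝ (Fin d)) 1,
        ⨍ w : sphere (0 : EuclideanSpace ℝ (Fin d)) 1,
          ⟪f (z : EuclideanSpace ℝ (Fin d)), f (w : EuclideanSpace ℝ (Fin d))⟫ ^ 2
        ∂((volume : Measure (EuclideanSpace ℝ (Fin d))).toSphere)
        ∂((volume : Measure (EuclideanSpace ℝ (Fin d))).toSphere))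
        = ⨍ _ : sphere (0 : EuclideanSpace ℝ (Fin d)) 1, (1 / d : ℝ)
          ∂((volume : Measure (EuclideanSpace ℝ (Fin d))).toSphere) :=
          average_congr (Filter.Eventually.of_forall hin)
      _ = 1 / d := average_const _ _
  refine ⟨?_, heq⟩
  rw [heq]
  -- the strict inequality part
  have hin2 : ∀ z : sphere (0 : EuclideanSpace ℝ (Fin d)) 1,
      (⨍ w : sphere (0 : EuclideanSpace ℝ (Fin d)) 1,
        ⟪f (z : EuclideanSpace ℝ (Fin d)), g (w : EuclideanSpace ℝ (Fin d))⟫ ^ 2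
      ∂((volume : Measure (EuclideanSpace ℝ (Fin d))).toSphere))
      = ‖A (f (z : EuclideanSpace ℝ (Fin d)))‖ ^ 2 / d := by
    intro z
    have h1 : (⨍ w : sphere (0 : EuclideanSpace ℝ (Fin d)) 1,
        ⟪f (z : EuclideanSpace ℝ (Fin d)), g (w : EuclideanSpace ℝ (Fin d))⟫ ^ 2
        ∂((volume : Measure (EuclideanSpace ℝ (Fin d))).toSphere))
        = ⨍ w : sphere (0 : EuclideanSpace ℝ (Fin d)) 1,
          ⟪(w : EuclideanSpace ℝ (Fin d)), A (f (z : EuclideanSpace ℝ (Fin d)))⟫ ^ 2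
        ∂((volume : Measure (EuclideanSpace ℝ (Fin d))).toSphere) :=
      average_congr (Filter.Eventually.of_forall fun w => by
        show ⟪f (z : EuclideanSpace ℝ (Fin d)), g (w : EuclideanSpace ℝ (Fin d))⟫ ^ 2
          = ⟪(w : EuclideanSpace ℝ (Fin d)), A (f (z : EuclideanSpace ℝ (Fin d)))⟫ ^ 2
        rw [hA, LinearMap.adjoint_inner_right, real_inner_comm]
        rfl)
    rw [h1, average_inner_sq hd]
  have hrw : (⨍ z : sphere (0 : EuclideanSpace ℝ (Fin d)) 1,
      ⨍ w : sphere (0 : EuclideanSpace ℝ (Fin d)) 1,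
        ⟪f (z : EuclideanSpace ℝ (Fin d)), g (w : EuclideanSpace ℝ (Fin d))⟫ ^ 2
      ∂((volume : Measure (EuclideanSpace ℝ (Fin d))).toSphere)
      ∂((volume : Measure (EuclideanSpace ℝ (Fin d))).toSphere))
      = ⨍ z : sphere (0 : EuclideanSpace ℝ (Fin d)) 1,
        ‖A (f (z : EuclideanSpace ℝ (Fin d)))‖ ^ 2 / d
      ∂((volume : Measure (EuclideanSpace ℝ (Fin d))).toSphere) :=
    average_congr (Filter.Eventually.of_forall hin2)
  rw [hrw]
  -- maximum of the continuous function on the compact sphere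
  have hq : Continuous (fun z : sphere (0 : EuclideanSpace ℝ (Fin d)) 1 =>
      ‖A (f (z : EuclideanSpace ℝ (Fin d)))‖ ^ 2 / d) := by
    refine Continuous.div_const ?_ _
    exact (((A.continuous_of_finiteDimensional).comp
      (f.continuous.comp continuous_subtype_val)).norm.pow 2)
  obtain ⟨z₀, -, hz₀⟩ := isCompact_univ.exists_isMaxOn Set.univ_nonempty hq.continuousOn
  have hlt : ∀ z : sphere (0 : EuclideanSpace ℝ (Fin d)) 1,
      ‖A (f (z : EuclideanSpace ℝ (Fin d)))‖ ^ 2 / d < 1 / d := by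
    intro z
    have hkey := norm_adjoint_lt f g hindep (z : EuclideanSpace ℝ (Fin d))
      (mem_sphere_zero_iff_norm.1 z.2)
    have hsq : ‖A (f (z : EuclideanSpace ℝ (Fin d)))‖ ^ 2 < 1 :=
      pow_lt_one₀ (norm_nonneg _) hkey (by norm_num)
    have hdpos : (0:ℝ) < d := Nat.cast_pos.mpr hd
    gcongr

  calc (⨍ z : sphere (0 : EuclideanSpace ℝ (Fin d)) 1,
      ‖A (f (z : EuclideanSpace ℝ (Fin d)))‖ ^ 2 / d
      ∂((volume : Measure (EuclideanSpace ℝ (Fin d))).toSphere))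
      ≤ ‖A (f (z₀ : EuclideanSpace ℝ (Fin d)))‖ ^ 2 / d := by
        apply average_le_of_le _ (hq.integrable_of_hasCompactSupport
          (HasCompactSupport.of_compactSpace _))
        intro a; exact hz₀ (Set.mem_univ a)
    _ < 1 / d := hlt z₀
end
end

section
/- Let |ψ⟩ be a unit vector and U⁺, U⁻ nonempty subsets of the unitary group on a finite-dimensional Hilbert space such that the fidelity kernel k(D,D') = |⟨ψ|D†D'|ψ⟩|² equals 1 whenever D, D' are in the same class and 0 otherwise. Then there exist a subgroup S of the unitary group and elements C₊ ∈ U⁺, C₋ ∈ U⁻ such that: (1) U⁺ ⊆ C₊S and U⁻ ⊆ C₋S; (2) every S ∈ S fixes |ψ⟩ up to a global phase; (3) ⟨ψ|C₊†C₋|ψ⟩ = 0. -/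
open Matrix Complex

/-- The fidelity quantum kernel `k(D, D') = |⟨ψ|D†D'|ψ⟩|²` on unitaries. -/
noncomputable def fidKernel {N : ℕ} (ψ : Fin N → ℂ)
    (D D' : Matrix.unitaryGroup (Fin N) ℂ) : ℝ :=
  ‖(star ψ ⬝ᵥ ((((D : Matrix (Fin N) (Fin N) ℂ))ᴴ
    * (D' : Matrix (Fin N) (Fin N) ℂ)) *ᵥ ψ))‖ ^ 2

lemma dot_eq_inner {N : ℕ} (x y : Fin N → ℂ) :
    star x ⬝ᵥ y = @inner ℂ (EuclideanSpace ℂ (Fin N)) _ (WithLp.toLp 2 x) (WithLp.toLp 2 y) := by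
  simp [PiLp.inner_apply, dotProduct, RCLike.inner_apply, mul_comm]

lemma cs_key {N : ℕ} (ψ v : Fin N → ℂ) (hψ : star ψ ⬝ᵥ ψ = 1) (hv : star v ⬝ᵥ v = 1)
    (h : ‖star ψ ⬝ᵥ v‖ = 1) :
    ∃ θ : ℝ, v = Complex.exp (θ * Complex.I) • ψ := by
  set ψ' : EuclideanSpace ℂ (Fin N) := WithLp.toLp 2 ψ with hψ'
  set v' : EuclideanSpace ℂ (Fin N) := WithLp.toLp 2 v with hv'
  have hnψ : ‖ψ'‖ = 1 := by
    have h1 : (@inner ℂ (EuclideanSpace ℂ (Fin N)) _ ψ' ψ') = 1 := by rw [hψ', ← dot_eq_inner]; exact hψ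
    rw [inner_self_eq_norm_sq_to_K] at h1
    have h2 : ((‖ψ'‖ : ℂ)) ^ 2 = 1 := h1
    have h3 : (‖ψ'‖ : ℝ) ^ 2 = 1 := by exact_mod_cast h2
    nlinarith [norm_nonneg ψ']
  have hnv : ‖v'‖ = 1 := by
    have h1 : (@inner ℂ (EuclideanSpace ℂ (Fin N)) _ v' v') = 1 := by rw [hv', ← dot_eq_inner]; exact hv
    rw [inner_self_eq_norm_sq_to_K] at h1
    have h2 : ((‖v'‖ : ℂ)) ^ 2 = 1 := h1
    have h3 : (‖v'‖ : ℝ) ^ 2 = 1 := by exact_mod_cast h2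
    nlinarith [norm_nonneg v']
  have hψ0 : ψ' ≠ 0 := by intro h0; rw [h0, norm_zero] at hnψ; norm_num at hnψ
  have hv0 : v' ≠ 0 := by intro h0; rw [h0, norm_zero] at hnv; norm_num at hnv
  have hnorm : ‖(@inner ℂ (EuclideanSpace ℂ (Fin N)) _ ψ' v')‖ = ‖ψ'‖ * ‖v'‖ := by
    rw [hnψ, hnv, hψ', hv', ← dot_eq_inner]
    simpa using h
  obtain ⟨r, hr0, hrv⟩ := (norm_inner_eq_norm_iff hψ0 hv0).1 hnorm
  have hveq : v = r • ψ := by simpa using congrArg WithLp.ofLp hrv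
  have habs : ‖r‖ = 1 := by
    have : star (r • ψ) ⬝ᵥ (r • ψ) = 1 := hveq ▸ hv
    rw [star_smul, smul_dotProduct, dotProduct_smul, hψ] at this
    have h2 : (starRingEnd ℂ) r * r = 1 := by simpa using this
    have h3 : ((Complex.normSq r : ℂ)) = 1 := by
      rw [Complex.normSq_eq_conj_mul_self]; exact h2
    have h4 : Complex.normSq r = 1 := by exact_mod_cast h3
    have h5 := Complex.sq_norm r
    nlinarith [norm_nonneg r]
  refine ⟨Complex.arg r, ?_⟩
  have : v' = Complex.exp ((Complex.arg r : ℂ) * Complex.I) • ψ' := by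
    rw [hrv]
    congr 1
    conv_lhs => rw [← Complex.norm_mul_exp_arg_mul_I r]
    rw [habs, Complex.ofReal_one, one_mul]
  simpa using congrArg WithLp.ofLp this


lemma unitary_dot_self {N : ℕ} (U : Matrix.unitaryGroup (Fin N) ℂ) (v : Fin N → ℂ) :
    star ((U : Matrix (Fin N) (Fin N) ℂ) *ᵥ v) ⬝ᵥ ((U : Matrix (Fin N) (Fin N) ℂ) *ᵥ v)
      = star v ⬝ᵥ v := by
  rw [Matrix.star_mulVec, Matrix.dotProduct_mulVec, Matrix.vecMul_vecMul,
    ← Matrix.star_eq_conjTranspose, U.2.1, Matrix.vecMul_one]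

/-- Ideal kernel implies covariance: if the fidelity kernel equals `1` on same-class pairs
and `0` on different-class pairs for nonempty classes `U⁺`, `U⁻`, then there exist a
subgroup `S` and `C₊ ∈ U⁺`, `C₋ ∈ U⁻` with `U⁺ ⊆ C₊S`, `U⁻ ⊆ C₋S`, every `S ∈ S` fixes
`|ψ⟩` up to global phase, and `⟨ψ|C₊†C₋|ψ⟩ = 0`. -/
theorem ideal_kernel_implies_covariant (N : ℕ) (ψ : Fin N → ℂ)
    (hψ : star ψ ⬝ᵥ ψ = 1)
    (Up Um : Set (Matrix.unitaryGroup (Fin N) ℂ))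
    (hUpne : Up.Nonempty) (hUmne : Um.Nonempty)
    (h1p : ∀ D ∈ Up, ∀ D' ∈ Up, fidKernel ψ D D' = 1)
    (h1m : ∀ D ∈ Um, ∀ D' ∈ Um, fidKernel ψ D D' = 1)
    (h0 : ∀ D ∈ Up, ∀ D' ∈ Um, fidKernel ψ D D' = 0) :
    ∃ S : Subgroup (Matrix.unitaryGroup (Fin N) ℂ),
    ∃ Cp ∈ Up, ∃ Cm ∈ Um,
      (∀ D ∈ Up, ∃ s ∈ S, D = Cp * s) ∧
      (∀ D ∈ Um, ∃ s ∈ S, D = Cm * s) ∧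
      (∀ s ∈ S, ∃ θ : ℝ,
        (s : Matrix (Fin N) (Fin N) ℂ) *ᵥ ψ = Complex.exp (θ * Complex.I) • ψ) ∧
      star ψ ⬝ᵥ ((((Cp : Matrix (Fin N) (Fin N) ℂ))ᴴ
        * (Cm : Matrix (Fin N) (Fin N) ℂ)) *ᵥ ψ) = 0 := by
  obtain ⟨Cp, hCp⟩ := hUpne
  obtain ⟨Cm, hCm⟩ := hUmne
  set S : Subgroup (Matrix.unitaryGroup (Fin N) ℂ) :=
    { carrier := {s | ∃ θ : ℝ,
        (s : Matrix (Fin N) (Fin N) ℂ) *ᵥ ψ = Complex.exp (θ * Complex.I) • ψ}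
      one_mem' := ⟨0, by simp⟩
      mul_mem' := by
        rintro a b ⟨θ, ha⟩ ⟨φ, hb⟩
        refine ⟨φ + θ, ?_⟩
        have : ((a * b : Matrix.unitaryGroup (Fin N) ℂ) : Matrix (Fin N) (Fin N) ℂ)
            = (a : Matrix (Fin N) (Fin N) ℂ) * (b : Matrix (Fin N) (Fin N) ℂ) := rfl
        rw [this, ← Matrix.mulVec_mulVec, hb, Matrix.mulVec_smul, ha, smul_smul,
          ← Complex.exp_add]
        congr 2
        push_cast
        ring
      inv_mem' := by
        rintro a ⟨θ, ha⟩
        refine ⟨-θ, ?_⟩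
        have h1 : ((a⁻¹ : Matrix.unitaryGroup (Fin N) ℂ) : Matrix (Fin N) (Fin N) ℂ)
            *ᵥ ((a : Matrix (Fin N) (Fin N) ℂ) *ᵥ ψ) = ψ := by
          rw [Matrix.mulVec_mulVec]
          have : ((a⁻¹ : Matrix.unitaryGroup (Fin N) ℂ) : Matrix (Fin N) (Fin N) ℂ)
              * (a : Matrix (Fin N) (Fin N) ℂ)
              = ((a⁻¹ * a : Matrix.unitaryGroup (Fin N) ℂ) : Matrix (Fin N) (Fin N) ℂ) := rfl
          rw [this, inv_mul_cancel]
          simp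
        rw [ha, Matrix.mulVec_smul] at h1
        have h2 : ((a⁻¹ : Matrix.unitaryGroup (Fin N) ℂ) : Matrix (Fin N) (Fin N) ℂ) *ᵥ ψ
            = (Complex.exp (θ * Complex.I))⁻¹ • ψ := by
          symm
          rw [inv_smul_eq_iff₀ (Complex.exp_ne_zero _)]
          exact h1.symm
        rw [h2, ← Complex.exp_neg]
        congr 2
        push_cast
        ring } with hS
  have key : ∀ C D : Matrix.unitaryGroup (Fin N) ℂ, fidKernel ψ C D = 1 → C⁻¹ * D ∈ S := by
    intro C D hk
    have habs : ‖(star ψ ⬝ᵥ ((((C : Matrix (Fin N) (Fin N) ℂ))ᴴ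
        * (D : Matrix (Fin N) (Fin N) ℂ)) *ᵥ ψ))‖ = 1 := by
      unfold fidKernel at hk
      nlinarith [norm_nonneg (star ψ ⬝ᵥ ((((C : Matrix (Fin N) (Fin N) ℂ))ᴴ
        * (D : Matrix (Fin N) (Fin N) ℂ)) *ᵥ ψ))]
    have hcoe : (((C⁻¹ * D : Matrix.unitaryGroup (Fin N) ℂ)) : Matrix (Fin N) (Fin N) ℂ)
        = ((C : Matrix (Fin N) (Fin N) ℂ))ᴴ * (D : Matrix (Fin N) (Fin N) ℂ) := rfl
    have hv : star ((((C : Matrix (Fin N) (Fin N) ℂ))ᴴ * (D : Matrix (Fin N) (Fin N) ℂ)) *ᵥ ψ)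
        ⬝ᵥ ((((C : Matrix (Fin N) (Fin N) ℂ))ᴴ * (D : Matrix (Fin N) (Fin N) ℂ)) *ᵥ ψ) = 1 := by
      rw [← hcoe, unitary_dot_self _ _ , hψ]
    obtain ⟨θ, hθ⟩ := cs_key ψ _ hψ hv habs
    exact ⟨θ, by rw [hcoe, hθ]⟩
  refine ⟨S, Cp, hCp, Cm, hCm, ?_, ?_, ?_, ?_⟩
  · intro D hD
    exact ⟨Cp⁻¹ * D, key Cp D (h1p Cp hCp D hD), by group⟩
  · intro D hD
    exact ⟨Cm⁻¹ * D, key Cm D (h1m Cm hCm D hD), by group⟩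
  · rintro s ⟨θ, hθ⟩
    exact ⟨θ, hθ⟩
  · have hk := h0 Cp hCp Cm hCm
    unfold fidKernel at hk
    have := pow_eq_zero_iff (n := 2) (by norm_num) |>.1 hk
    exact norm_eq_zero.1 this
end
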